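/- For all n, m, α, β, γ ∈ ℕ, the iterated formal partial derivative D^{(n,m)} B#_{α,β,γ} of the box spline symbol satisfies, as an identity in ℝ[z₁,z₂]: D^{(n,m)} B#_{α,β,γ}(z₁,z₂) = Σ_{ℓ=0}^{γ} C(γ,ℓ) · [ Σ_{i=0}^{n} (n!/2^n) C(α+ℓ, n−i) ((1+z₁)/2)^{α+ℓ−(n−i)} C(γ−ℓ, i) ((z₁−1)/2)^{γ−ℓ−i} ] · [ Σ_{j=0}^{m} (m!/2^m) C(β+ℓ, m−j) ((1+z₂)/2)^{β+ℓ−(m−j)} C(γ−ℓ, j) ((z₂−1)/2)^{γ−ℓ−j} ], where C(·,·) denotes the binomial coefficient and each summand is understood to be zero whenever one of its binomial coefficients vanishes (so all exponents occurring in nonzero summands are nonnegative). -/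

import Mathlib

open MvPolynomial

/-- The normalized three-directional box spline symbol
`B#_{α,β,γ}(z₁,z₂) = ((1+z₁)/2)^α ((1+z₂)/2)^β ((1+z₁z₂)/2)^γ`. -/
noncomputable def Bs (α β γ : ℕ) : MvPolynomial (Fin 2) ℝ :=
  (C (1 / 2 : ℝ) * (1 + X 0)) ^ α * (C (1 / 2 : ℝ) * (1 + X 1)) ^ β *
    (C (1 / 2 : ℝ) * (1 + X 0 * X 1)) ^ γ

/-- The formal partial derivative `D^{(n,m)} = ∂^{n+m}/∂z₁^n ∂z₂^m`. -/
noncomputable def Dnm (n m : ℕ) : Module.End ℝ (MvPolynomial (Fin 2) ℝ) :=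
  ((pderiv (0 : Fin 2)).toLinearMap ^ n) * ((pderiv (1 : Fin 2)).toLinearMap ^ m)

noncomputable def uu (i : Fin 2) : MvPolynomial (Fin 2) ℝ := C (1/2 : ℝ) * (1 + X i)
noncomputable def ww (i : Fin 2) : MvPolynomial (Fin 2) ℝ := C (1/2 : ℝ) * (X i - 1)

lemma pderiv_uu (i : Fin 2) : pderiv i (uu i) = C (1/2 : ℝ) := by
  simp [uu, pderiv_C_mul]

lemma pderiv_ww (i : Fin 2) : pderiv i (ww i) = C (1/2 : ℝ) := by
  simp [ww, pderiv_C_mul, pderiv_mul]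

lemma pderiv_uu_ne {i j : Fin 2} (h : i ≠ j) : pderiv j (uu i) = 0 := by
  simp [uu, pderiv_C_mul, h]

lemma pderiv_ww_ne {i j : Fin 2} (h : i ≠ j) : pderiv j (ww i) = 0 := by
  simp [ww, pderiv_C_mul, pderiv_mul, h]

lemma pderiv_term (i : Fin 2) (c : ℝ) (e f : ℕ) :
    pderiv i (C c * uu i ^ e * ww i ^ f) =
      C (c * e / 2) * uu i ^ (e-1) * ww i ^ f
        + C (c * f / 2) * uu i ^ e * ww i ^ (f-1) := by
  rw [mul_assoc, pderiv_C_mul, pderiv_mul, pderiv_pow, pderiv_pow, pderiv_uu, pderiv_ww]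
  have hc : ∀ k : ℕ, C ((k : ℝ)) = ((k : MvPolynomial (Fin 2) ℝ)) := by simp
  have h2 : (C (c * (e:ℝ) / 2) : MvPolynomial (Fin 2) ℝ) = C c * C (e:ℝ) * C (1/2:ℝ) := by
    rw [← map_mul, ← map_mul]; ring_nf
  have h3 : (C (c * (f:ℝ) / 2) : MvPolynomial (Fin 2) ℝ) = C c * C (f:ℝ) * C (1/2:ℝ) := by
    rw [← map_mul, ← map_mul]; ring_nf
  rw [h2, h3, hc, hc]
  ring

lemma iter_formula (i : Fin 2) (n a b : ℕ) :
    ((pderiv i).toLinearMap ^ n) (uu i ^ a * ww i ^ b) =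
      ∑ k ∈ Finset.range (n + 1),
        C ((n.factorial : ℝ) / 2 ^ n * ((a.choose (n - k)) : ℝ) * ((b.choose k) : ℝ)) *
          uu i ^ (a - (n - k)) * ww i ^ (b - k) := by
  induction n with
  | zero => simp
  | succ n ih =>
    rw [pow_succ', Module.End.mul_apply, ih, map_sum]
    have hterm : ∀ k ∈ Finset.range (n+1),
        (pderiv i) (C ((n.factorial : ℝ) / 2 ^ n * ((a.choose (n - k)) : ℝ) * ((b.choose k) : ℝ)) *
          uu i ^ (a - (n - k)) * ww i ^ (b - k)) =
        C ((n.factorial : ℝ) / 2 ^ n * ((a.choose (n - k)) : ℝ) * ((b.choose k) : ℝ) * ((a - (n-k) : ℕ) : ℝ) / 2) *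
            uu i ^ (a - (n-k) - 1) * ww i ^ (b - k)
          + C ((n.factorial : ℝ) / 2 ^ n * ((a.choose (n - k)) : ℝ) * ((b.choose k) : ℝ) * ((b - k : ℕ) : ℝ) / 2) *
            uu i ^ (a - (n-k)) * ww i ^ (b - k - 1) := fun k _ => pderiv_term i _ _ _
    simp only [Derivation.coeFn_coe]
    rw [Finset.sum_congr rfl hterm, Finset.sum_add_distrib]
    have hsplit : ∀ j ∈ Finset.range (n+2),
        C (((n+1).factorial : ℝ) / 2 ^ (n+1) * ((a.choose (n+1-j)) : ℝ) * ((b.choose j) : ℝ)) *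
          uu i ^ (a - (n+1-j)) * ww i ^ (b - j)
        = C ((n.factorial : ℝ) / 2 ^ n * (((n+1-j) * a.choose (n+1-j) : ℕ) : ℝ) * ((b.choose j) : ℝ) / 2) *
            uu i ^ (a - (n+1-j)) * ww i ^ (b - j)
          + C ((n.factorial : ℝ) / 2 ^ n * ((a.choose (n+1-j)) : ℝ) * (((j * b.choose j : ℕ)) : ℝ) / 2) *
            uu i ^ (a - (n+1-j)) * ww i ^ (b - j) := by
      intro j hj
      rw [Finset.mem_range] at hj
      have hj' : j ≤ n + 1 := Nat.lt_succ_iff.mp hj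
      rw [← add_mul, ← add_mul, ← map_add]
      congr 2
      have hcs : ((n+1-j : ℕ) : ℝ) = (n : ℝ) + 1 - (j : ℝ) := by
        push_cast [Nat.cast_sub hj']; ring
      push_cast [Nat.factorial_succ, hcs]
      field_simp
      ring
    rw [show (n + 1 + 1) = n + 2 from rfl, Finset.sum_congr rfl hsplit, Finset.sum_add_distrib]
    congr 1
    · -- A-part
      conv_rhs => rw [Finset.sum_range_succ]
      have hlast : (((n+1-(n+1)) * a.choose (n+1-(n+1)) : ℕ) : ℝ) = 0 := by simp
      rw [hlast, mul_zero, zero_mul, zero_div, map_zero, zero_mul, zero_mul, add_zero]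
      apply Finset.sum_congr rfl
      intro k hk
      rw [Finset.mem_range] at hk
      have hk' : k ≤ n := Nat.lt_succ_iff.mp hk
      have h1 : n + 1 - k = (n - k) + 1 := by omega
      have h2 : a - (n - k) - 1 = a - (n + 1 - k) := by omega
      have h3 : (n+1-k) * a.choose (n+1-k) = a.choose (n-k) * (a - (n-k)) := by
        rw [h1, mul_comm]; exact Nat.choose_succ_right_eq a (n-k)
      rw [h2, h3]
      congr 2
      push_cast
      ring
    · -- B-part
      conv_rhs => rw [Finset.sum_range_succ']
      have h0 : (((0 : ℕ) * b.choose 0 : ℕ) : ℝ) = 0 := by simp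
      rw [h0, mul_zero, zero_div, map_zero, zero_mul, zero_mul, add_zero]
      apply Finset.sum_congr rfl
      intro k hk
      have h1 : n + 1 - (k + 1) = n - k := by omega
      have h2 : b - (k + 1) = b - k - 1 := by omega
      have h3 : (k+1) * b.choose (k+1) = b.choose k * (b - k) := by
        rw [mul_comm]; exact Nat.choose_succ_right_eq b k
      rw [h1, h2, h3]
      congr 2
      push_cast
      ring

lemma pow_pderiv_mul_right {i : Fin 2} {P : MvPolynomial (Fin 2) ℝ} (hP : pderiv i P = 0)
    (Q : MvPolynomial (Fin 2) ℝ) (k : ℕ) :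
    ((pderiv i).toLinearMap ^ k) (P * Q) = P * ((pderiv i).toLinearMap ^ k) Q := by
  induction k generalizing Q with
  | zero => simp
  | succ k ih =>
    rw [pow_succ, Module.End.mul_apply, Module.End.mul_apply]
    simp only [Derivation.coeFn_coe]
    rw [pderiv_mul, hP, zero_mul, zero_add]
    exact ih _

lemma pow_pderiv_mul_left {i : Fin 2} {Q : MvPolynomial (Fin 2) ℝ} (hQ : pderiv i Q = 0)
    (P : MvPolynomial (Fin 2) ℝ) (k : ℕ) :
    ((pderiv i).toLinearMap ^ k) (P * Q) = ((pderiv i).toLinearMap ^ k) P * Q := by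
  induction k with
  | zero => simp
  | succ k ih =>
    rw [pow_succ', Module.End.mul_apply, Module.End.mul_apply, ih]
    simp only [Derivation.coeFn_coe]
    rw [pderiv_mul, hQ, mul_zero, add_zero]

lemma pderiv_mix_zero {i j : Fin 2} (h : i ≠ j) (e f : ℕ) :
    pderiv j (uu i ^ e * ww i ^ f) = 0 := by
  simp [pderiv_mul, pderiv_pow, pderiv_uu_ne h, pderiv_ww_ne h]

lemma key_identity :
    (C (1/2 : ℝ) * (1 + X 0 * X 1) : MvPolynomial (Fin 2) ℝ) = uu 0 * uu 1 + ww 0 * ww 1 := by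
  have h1 : (uu 0 * uu 1 + ww 0 * ww 1 : MvPolynomial (Fin 2) ℝ)
      = C (1/2 : ℝ) * C (1/2 : ℝ) * C (2 : ℝ) * (1 + X 0 * X 1) := by
    unfold uu ww
    rw [show (C (2:ℝ) : MvPolynomial (Fin 2) ℝ) = 2 from map_ofNat _ 2]
    ring
  rw [h1, ← map_mul, ← map_mul]
  norm_num

lemma Bs_expand (α β γ : ℕ) :
    Bs α β γ = ∑ ℓ ∈ Finset.range (γ + 1),
      C ((γ.choose ℓ : ℝ)) *
        ((uu 0 ^ (α + ℓ) * ww 0 ^ (γ - ℓ)) * (uu 1 ^ (β + ℓ) * ww 1 ^ (γ - ℓ))) := by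
  have hBs : Bs α β γ = uu 0 ^ α * uu 1 ^ β * (uu 0 * uu 1 + ww 0 * ww 1) ^ γ := by
    rw [← key_identity]; rfl
  rw [hBs, Commute.add_pow (Commute.all _ _), Finset.mul_sum]
  apply Finset.sum_congr rfl
  intro ℓ hℓ
  have hcast : ((γ.choose ℓ : ℕ) : MvPolynomial (Fin 2) ℝ) = C ((γ.choose ℓ : ℝ)) := by simp
  rw [hcast]
  rw [mul_pow, mul_pow, pow_add, pow_add]
  ring

lemma pderiv_sum_mix_zero {i j : Fin 2} (h : i ≠ j) (s : Finset ℕ) (c : ℕ → ℝ) (e f : ℕ → ℕ) :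
    pderiv j (∑ k ∈ s, C (c k) * uu i ^ (e k) * ww i ^ (f k)) = 0 := by
  rw [map_sum]
  apply Finset.sum_eq_zero
  intro k _
  rw [mul_assoc, pderiv_C_mul, pderiv_mix_zero h, mul_zero]

/-- The Leibniz-type formula for `D^{(n,m)} B#_{α,β,γ}`.  Summands whose binomial
coefficients vanish are zero (the vanishing binomial coefficient is a factor), so the
truncated natural subtraction in the exponents is harmless. -/
theorem stmt_14 (n m α β γ : ℕ) :
    Dnm n m (Bs α β γ) =
      ∑ ℓ ∈ Finset.range (γ + 1),
        C ((γ.choose ℓ : ℝ)) *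
        (∑ i ∈ Finset.range (n + 1),
          C ((n.factorial : ℝ) / 2 ^ n * ((α + ℓ).choose (n - i) : ℝ) *
              ((γ - ℓ).choose i : ℝ)) *
            (C (1 / 2 : ℝ) * (1 + X 0)) ^ (α + ℓ - (n - i)) *
            (C (1 / 2 : ℝ) * (X 0 - 1)) ^ (γ - ℓ - i)) *
        (∑ j ∈ Finset.range (m + 1),
          C ((m.factorial : ℝ) / 2 ^ m * ((β + ℓ).choose (m - j) : ℝ) *
              ((γ - ℓ).choose j : ℝ)) *
            (C (1 / 2 : ℝ) * (1 + X 1)) ^ (β + ℓ - (m - j)) *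
            (C (1 / 2 : ℝ) * (X 1 - 1)) ^ (γ - ℓ - j)) := by
  rw [Bs_expand, map_sum]
  apply Finset.sum_congr rfl
  intro ℓ hℓ
  have hD : ∀ x, Dnm n m x
      = ((pderiv (0 : Fin 2)).toLinearMap ^ n) (((pderiv (1 : Fin 2)).toLinearMap ^ m) x) :=
    fun x => rfl
  rw [hD, C_mul', map_smul,
    pow_pderiv_mul_right (pderiv_mix_zero (show (0 : Fin 2) ≠ 1 by decide) _ _) _ m,
    iter_formula 1 m (β + ℓ) (γ - ℓ), map_smul,
    pow_pderiv_mul_left (pderiv_sum_mix_zero (show (1 : Fin 2) ≠ 0 by decide) _ _ _ _) _ n,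
    iter_formula 0 n (α + ℓ) (γ - ℓ), ← C_mul', ← mul_assoc]
  unfold uu ww
  rfl
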